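/- Let (Y, C, X) be random variables with Y, C nonnegative real-valued and X taking values in R^d. Let G(t) = P(C > t) be the survival function of C, and suppose C and Y are independent, P(Y ≤ C | X, Y) = P(Y ≤ C | Y), and G(Y) > 0 almost surely. Set Z = min(Y, C) and δ = 1_{Y ≤ C}. Then for any bounded measurable ψ : R → R, E[δ ψ(Z) / G(Z) | X] = E[ψ(Y) | X] almost surely. -/

import Mathlib

open MeasureTheory ProbabilityTheory
lemma aux_Ici {Ω : Type*} [MeasurableSpace Ω] (μ : Measure Ω) [IsProbabilityMeasure μ]
    (C : Ω → ℝ) (hC : Measurable C) (G : ℝ → ℝ)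
    (hG : ∀ t, G t = (μ {ω | t < C ω}).toReal) (hGcont : Continuous G) (y : ℝ) :
    (μ.map C) (Set.Ici y) = ENNReal.ofReal (G y) := by
  rw [Measure.map_apply hC measurableSet_Ici]
  have hfin : μ (C ⁻¹' Set.Ici y) ≠ ⊤ := measure_ne_top μ _
  have htoReal : (μ (C ⁻¹' Set.Ici y)).toReal = G y := by
    refine le_antisymm ?_ ?_
    · have htend : Filter.Tendsto (fun n : ℕ => G (y - 1/(n+1))) Filter.atTop (nhds (G y)) := by
        apply (hGcont.tendsto y).comp
        have h0 : Filter.Tendsto (fun n : ℕ => (1:ℝ)/(n+1)) Filter.atTop (nhds 0) :=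
          tendsto_one_div_add_atTop_nhds_zero_nat
        simpa using (tendsto_const_nhds.sub h0)
      refine ge_of_tendsto htend (Filter.Eventually.of_forall fun n => ?_)
      rw [hG]
      refine ENNReal.toReal_mono (measure_ne_top μ _) (measure_mono ?_)
      intro ω hω
      simp only [Set.mem_preimage, Set.mem_Ici] at hω
      simp only [Set.mem_setOf_eq]
      have : (0:ℝ) < 1/(n+1) := by positivity
      linarith
    · rw [hG]
      refine ENNReal.toReal_mono (measure_ne_top μ _) (measure_mono ?_)
      intro ω hω
      simp only [Set.mem_setOf_eq] at hω
      exact Set.mem_preimage.mpr (Set.mem_Ici.mpr (le_of_lt hω))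
  rw [← htoReal, ENNReal.ofReal_toReal hfin]
lemma aux_seteq {Ω : Type*} [MeasurableSpace Ω] (μ : Measure Ω) [IsProbabilityMeasure μ]
    (Y C : Ω → ℝ) (hY : Measurable Y) (hC : Measurable C)
    (hlaw : μ.map (fun ω => (Y ω, C ω)) = (μ.map Y).prod (μ.map C))
    (G : ℝ → ℝ) (hGm : Measurable G) (hG0 : ∀ t, 0 ≤ G t)
    (hIci : ∀ y, (μ.map C) (Set.Ici y) = ENNReal.ofReal (G y))
    (B : Set ℝ) (hB : MeasurableSet B) :
    ∫ ω in Y ⁻¹' B, G (Y ω) ∂μ = ∫ ω in Y ⁻¹' B, (if Y ω ≤ C ω then (1:ℝ) else 0) ∂μ := by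
  have hprob : IsProbabilityMeasure (μ.map C) := Measure.isProbabilityMeasure_map hC.aemeasurable
  have hprobY : IsProbabilityMeasure (μ.map Y) := Measure.isProbabilityMeasure_map hY.aemeasurable
  have hinner : ∀ y : ℝ, ∫ c, (if y ≤ c then (1:ℝ) else 0) ∂(μ.map C) = G y := by
    intro y
    have h1 : (fun c => if y ≤ c then (1:ℝ) else 0) = (Set.Ici y).indicator (fun _ => (1:ℝ)) := by
      funext c; simp [Set.indicator_apply, Set.mem_Ici]
    rw [h1, integral_indicator measurableSet_Ici, setIntegral_const, measureReal_def, hIci,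
      ENNReal.toReal_ofReal (hG0 y), smul_eq_mul, mul_one]
  have hFmeas : Measurable (fun p : ℝ × ℝ =>
      B.indicator (fun _ => (1:ℝ)) p.1 * (if p.1 ≤ p.2 then (1:ℝ) else 0)) :=
    ((measurable_const.indicator hB).comp measurable_fst).mul
      (Measurable.ite (measurableSet_le measurable_fst measurable_snd)
        measurable_const measurable_const)
  have hRHS : ∫ ω in Y ⁻¹' B, (if Y ω ≤ C ω then (1:ℝ) else 0) ∂μ
      = ∫ y, B.indicator (fun _ => (1:ℝ)) y * G y ∂(μ.map Y) := by
    rw [← integral_indicator (hY hB)]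
    have heq : (fun ω => (Y ⁻¹' B).indicator (fun ω => if Y ω ≤ C ω then (1:ℝ) else 0) ω)
        = fun ω => B.indicator (fun _ => (1:ℝ)) (Y ω) * (if Y ω ≤ C ω then (1:ℝ) else 0) := by
      funext ω
      by_cases h : Y ω ∈ B
      · simp [Set.indicator_of_mem, h]
      · simp [Set.indicator_of_notMem, h]
    rw [heq]
    have hmapped : ∫ ω, B.indicator (fun _ => (1:ℝ)) (Y ω) * (if Y ω ≤ C ω then (1:ℝ) else 0) ∂μ
        = ∫ p : ℝ × ℝ, B.indicator (fun _ => (1:ℝ)) p.1 * (if p.1 ≤ p.2 then (1:ℝ) else 0)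
            ∂(μ.map (fun ω => (Y ω, C ω))) :=
      (integral_map (hY.prodMk hC).aemeasurable hFmeas.aestronglyMeasurable).symm
    rw [hmapped, hlaw]
    have hint : Integrable (fun p : ℝ × ℝ =>
        B.indicator (fun _ => (1:ℝ)) p.1 * (if p.1 ≤ p.2 then (1:ℝ) else 0))
        ((μ.map Y).prod (μ.map C)) := by
      refine (integrable_const (1:ℝ)).mono' hFmeas.aestronglyMeasurable
        (Filter.Eventually.of_forall fun p => ?_)
      rw [Real.norm_eq_abs, abs_mul]
      have h1 : |B.indicator (fun _ => (1:ℝ)) p.1| ≤ 1 := by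
        by_cases h : p.1 ∈ B <;> simp [Set.indicator_apply, h]
      have h2 : |(if p.1 ≤ p.2 then (1:ℝ) else 0)| ≤ 1 := by
        by_cases h : p.1 ≤ p.2 <;> simp [h]
      calc |B.indicator (fun _ => (1:ℝ)) p.1| * |(if p.1 ≤ p.2 then (1:ℝ) else 0)| ≤ 1 * 1 :=
            mul_le_mul h1 h2 (abs_nonneg _) zero_le_one
        _ = 1 := mul_one 1
    rw [integral_prod _ hint]
    refine integral_congr_ae (Filter.Eventually.of_forall fun y => ?_)
    simp only []
    rw [integral_const_mul, hinner y]
  have hLHS : ∫ ω in Y ⁻¹' B, G (Y ω) ∂μ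
      = ∫ y, B.indicator (fun _ => (1:ℝ)) y * G y ∂(μ.map Y) := by
    rw [← integral_indicator (hY hB)]
    have heq : (fun ω => (Y ⁻¹' B).indicator (fun ω => G (Y ω)) ω)
        = fun ω => B.indicator (fun _ => (1:ℝ)) (Y ω) * G (Y ω) := by
      funext ω
      by_cases h : Y ω ∈ B
      · simp [Set.indicator_of_mem, h]
      · simp [Set.indicator_of_notMem, h]
    rw [heq]
    exact (integral_map hY.aemeasurable
      ((measurable_const.indicator hB).mul hGm).aestronglyMeasurable).symm
  rw [hLHS, hRHS]
lemma aux_int {Ω : Type*} [MeasurableSpace Ω] (μ : Measure Ω) [IsProbabilityMeasure μ]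
    (Y C : Ω → ℝ) (hY : Measurable Y) (hC : Measurable C)
    (hlaw : μ.map (fun ω => (Y ω, C ω)) = (μ.map Y).prod (μ.map C))
    (G : ℝ → ℝ) (hGm : Measurable G) (hG0 : ∀ t, 0 ≤ G t)
    (hIci : ∀ y, (μ.map C) (Set.Ici y) = ENNReal.ofReal (G y))
    (hGYpos : ∀ᵐ ω ∂μ, 0 < G (Y ω))
    (ψ : ℝ → ℝ) (hψm : Measurable ψ) (M : ℝ) (hM : ∀ y, |ψ y| ≤ M) :
    Integrable ((fun ω => ψ (Y ω) / G (Y ω)) * (fun ω => if Y ω ≤ C ω then (1:ℝ) else 0)) μ := by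
  have hM0 : 0 ≤ M := le_trans (abs_nonneg _) (hM 0)
  have hWmeas : Measurable ((fun ω => ψ (Y ω) / G (Y ω)) *
      (fun ω => if Y ω ≤ C ω then (1:ℝ) else 0)) :=
    ((hψm.comp hY).div (hGm.comp hY)).mul
      (Measurable.ite (measurableSet_le hY hC) measurable_const measurable_const)
  refine ⟨hWmeas.aestronglyMeasurable, ?_⟩
  set Φ : ℝ × ℝ → ENNReal := fun p => if p.1 ≤ p.2 then ENNReal.ofReal (M / G p.1) else 0
    with hΦdef
  have hΦmeas : Measurable Φ :=
    Measurable.ite (measurableSet_le measurable_fst measurable_snd)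
      (ENNReal.measurable_ofReal.comp (measurable_const.div (hGm.comp measurable_fst)))
      measurable_const
  have hbound : ∀ ω, (‖((fun ω => ψ (Y ω) / G (Y ω)) *
      (fun ω => if Y ω ≤ C ω then (1:ℝ) else 0)) ω‖₊ : ENNReal) ≤ Φ (Y ω, C ω) := by
    intro ω
    by_cases h : Y ω ≤ C ω
    · simp only [Pi.mul_apply, if_pos h, mul_one, hΦdef]
      rw [← enorm_eq_nnnorm, Real.enorm_eq_ofReal_abs]
      refine ENNReal.ofReal_le_ofReal ?_
      by_cases hg : G (Y ω) = 0
      · simp [hg]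
      · have hgpos : 0 < G (Y ω) := lt_of_le_of_ne (hG0 _) (Ne.symm hg)
        rw [abs_div, abs_of_pos hgpos]
        exact (div_le_div_iff_of_pos_right hgpos).mpr (hM _)
    · simp [Pi.mul_apply, if_neg h, hΦdef]
  have hae : ∀ᵐ y ∂(μ.map Y), 0 < G y :=
    (ae_map_iff hY.aemeasurable (measurableSet_lt measurable_const hGm)).mpr hGYpos
  show (∫⁻ ω, (‖((fun ω => ψ (Y ω) / G (Y ω)) *
      (fun ω => if Y ω ≤ C ω then (1:ℝ) else 0)) ω‖₊ : ENNReal) ∂μ) < ⊤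
  calc (∫⁻ ω, (‖((fun ω => ψ (Y ω) / G (Y ω)) *
      (fun ω => if Y ω ≤ C ω then (1:ℝ) else 0)) ω‖₊ : ENNReal) ∂μ)
      ≤ ∫⁻ ω, Φ (Y ω, C ω) ∂μ := lintegral_mono hbound
    _ = ∫⁻ p, Φ p ∂(μ.map (fun ω => (Y ω, C ω))) :=
        (lintegral_map hΦmeas (hY.prodMk hC)).symm
    _ = ∫⁻ p, Φ p ∂((μ.map Y).prod (μ.map C)) := by rw [hlaw]
    _ = ∫⁻ y, ∫⁻ c, Φ (y, c) ∂(μ.map C) ∂(μ.map Y) := lintegral_prod _ hΦmeas.aemeasurable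
    _ = ∫⁻ y, ENNReal.ofReal (M / G y) * ENNReal.ofReal (G y) ∂(μ.map Y) := by
        refine lintegral_congr fun y => ?_
        have hcurry : (∫⁻ c, Φ (y, c) ∂(μ.map C))
            = ∫⁻ c, (Set.Ici y).indicator (fun _ => ENNReal.ofReal (M / G y)) c ∂(μ.map C) :=
          lintegral_congr fun c => by simp [hΦdef, Set.indicator_apply, Set.mem_Ici]
        show (∫⁻ c, Φ (y, c) ∂(μ.map C)) = _
        rw [hcurry, lintegral_indicator measurableSet_Ici, setLIntegral_const, hIci]
    _ = ∫⁻ _, ENNReal.ofReal M ∂(μ.map Y) := by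
        refine lintegral_congr_ae ?_
        filter_upwards [hae] with y hy
        rw [← ENNReal.ofReal_mul (div_nonneg hM0 (hG0 y)), div_mul_cancel₀ _ (ne_of_gt hy)]
    _ < ⊤ := by
        have : IsProbabilityMeasure (μ.map Y) := Measure.isProbabilityMeasure_map hY.aemeasurable
        rw [lintegral_const]
        simp [ENNReal.ofReal_lt_top]

/-- The IPCW identity (2.1): under the censoring assumptions,
`E[δ ψ(Z) / G(Z) | X] = E[ψ(Y) | X]` a.s. -/
theorem ipcw_identity {Ω : Type*} [MeasurableSpace Ω] (μ : Measure Ω)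
    [IsProbabilityMeasure μ] {d : ℕ}
    (Y C : Ω → ℝ) (X : Ω → (Fin d → ℝ))
    (hY : Measurable Y) (hC : Measurable C) (hX : Measurable X)
    (hY0 : ∀ ω, 0 ≤ Y ω) (hC0 : ∀ ω, 0 ≤ C ω)
    (G : ℝ → ℝ) (hG : ∀ t, G t = (μ {ω | t < C ω}).toReal)
    (hGcont : Continuous G)
    (hind : IndepFun Y C μ)
    (hGYpos : ∀ᵐ ω ∂μ, 0 < G (Y ω))
    -- P(Y ≤ C | X, Y) = P(Y ≤ C | Y)
    (hcond : μ[(fun ω => if Y ω ≤ C ω then (1 : ℝ) else 0) |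
        (MeasurableSpace.comap X inferInstance) ⊔ (MeasurableSpace.comap Y inferInstance)]
      =ᵐ[μ] μ[(fun ω => if Y ω ≤ C ω then (1 : ℝ) else 0) |
        MeasurableSpace.comap Y inferInstance])
    (ψ : ℝ → ℝ) (hψm : Measurable ψ) (hψb : ∃ M, ∀ y, |ψ y| ≤ M) :
    μ[(fun ω => (if Y ω ≤ C ω then (1 : ℝ) else 0) * ψ (min (Y ω) (C ω)) /
        G (min (Y ω) (C ω))) | MeasurableSpace.comap X inferInstance]
      =ᵐ[μ] μ[(fun ω => ψ (Y ω)) | MeasurableSpace.comap X inferInstance] := by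
  obtain ⟨M, hM⟩ := hψb
  have hGm : Measurable G := hGcont.measurable
  have hG0 : ∀ t, 0 ≤ G t := fun t => by rw [hG]; exact ENNReal.toReal_nonneg
  have hG1 : ∀ t, G t ≤ 1 := fun t => by
    rw [hG]
    simpa using ENNReal.toReal_mono ENNReal.one_ne_top prob_le_one
  have hIci : ∀ y, (μ.map C) (Set.Ici y) = ENNReal.ofReal (G y) :=
    aux_Ici μ C hC G hG hGcont
  have hlaw : μ.map (fun ω => (Y ω, C ω)) = (μ.map Y).prod (μ.map C) :=
    (ProbabilityTheory.indepFun_iff_map_prod_eq_prod_map_map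
      hY.aemeasurable hC.aemeasurable).mp hind
  have hmY : MeasurableSpace.comap Y inferInstance ≤ (inferInstance : MeasurableSpace Ω) :=
    hY.comap_le
  have hmX : MeasurableSpace.comap X inferInstance ≤ (inferInstance : MeasurableSpace Ω) :=
    hX.comap_le
  have hm : (MeasurableSpace.comap X inferInstance ⊔ MeasurableSpace.comap Y inferInstance :
      MeasurableSpace Ω) ≤ (inferInstance : MeasurableSpace Ω) := sup_le hmX hmY
  have hYmY : Measurable[MeasurableSpace.comap Y inferInstance] Y :=
    measurable_iff_comap_le.mpr le_rfl
  have hδmeas : Measurable (fun ω => if Y ω ≤ C ω then (1:ℝ) else 0) :=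
    Measurable.ite (measurableSet_le hY hC) measurable_const measurable_const
  have hδint : Integrable (fun ω => if Y ω ≤ C ω then (1:ℝ) else 0) μ := by
    refine (integrable_const (1:ℝ)).mono' hδmeas.aestronglyMeasurable
      (Filter.Eventually.of_forall fun ω => ?_)
    by_cases h : Y ω ≤ C ω <;> simp [h]
  have hGYint : Integrable (fun ω => G (Y ω)) μ := by
    refine (integrable_const (1:ℝ)).mono' (hGm.comp hY).aestronglyMeasurable
      (Filter.Eventually.of_forall fun ω => ?_)
    rw [Real.norm_eq_abs, abs_of_nonneg (hG0 _)]
    exact hG1 _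
  have hcondY : (fun ω => G (Y ω)) =ᵐ[μ] μ[(fun ω => if Y ω ≤ C ω then (1:ℝ) else 0) |
      MeasurableSpace.comap Y inferInstance] := by
    refine ae_eq_condExp_of_forall_setIntegral_eq hmY hδint
      (fun s _ _ => hGYint.integrableOn) ?_ ?_
    · intro s hs _
      obtain ⟨B, hB, rfl⟩ := hs
      exact aux_seteq μ Y C hY hC hlaw G hGm hG0 hIci B hB
    · exact (hGm.comp hYmY).stronglyMeasurable.aestronglyMeasurable
  have hsm : StronglyMeasurable[MeasurableSpace.comap X inferInstance ⊔
      MeasurableSpace.comap Y inferInstance] (fun ω => ψ (Y ω) / G (Y ω)) := by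
    have h1 : Measurable[MeasurableSpace.comap Y inferInstance]
        (fun ω => ψ (Y ω) / G (Y ω)) := (hψm.comp hYmY).div (hGm.comp hYmY)
    apply Measurable.stronglyMeasurable
    exact h1.mono le_sup_right le_rfl
  have hWint : Integrable ((fun ω => ψ (Y ω) / G (Y ω)) *
      (fun ω => if Y ω ≤ C ω then (1:ℝ) else 0)) μ :=
    aux_int μ Y C hY hC hlaw G hGm hG0 hIci hGYpos ψ hψm M hM
  have hstep : μ[(fun ω => ψ (Y ω) / G (Y ω)) *
      (fun ω => if Y ω ≤ C ω then (1:ℝ) else 0) | MeasurableSpace.comap X inferInstance ⊔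
        MeasurableSpace.comap Y inferInstance] =ᵐ[μ] fun ω => ψ (Y ω) := by
    refine (condExp_mul_of_stronglyMeasurable_left hsm hWint hδint).trans ?_
    refine (Filter.EventuallyEq.mul Filter.EventuallyEq.rfl hcond).trans ?_
    refine (Filter.EventuallyEq.mul Filter.EventuallyEq.rfl hcondY.symm).trans ?_
    filter_upwards [hGYpos] with ω hω
    show ψ (Y ω) / G (Y ω) * G (Y ω) = ψ (Y ω)
    rw [div_mul_cancel₀ _ (ne_of_gt hω)]
  have hfW : (fun ω => (if Y ω ≤ C ω then (1:ℝ) else 0) * ψ (min (Y ω) (C ω)) /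
        G (min (Y ω) (C ω)))
      = (fun ω => ψ (Y ω) / G (Y ω)) * (fun ω => if Y ω ≤ C ω then (1:ℝ) else 0) := by
    funext ω
    by_cases h : Y ω ≤ C ω
    · simp only [Pi.mul_apply, if_pos h, min_eq_left h]
      ring
    · simp [Pi.mul_apply, h]
  rw [hfW]
  calc μ[(fun ω => ψ (Y ω) / G (Y ω)) * (fun ω => if Y ω ≤ C ω then (1:ℝ) else 0) |
        MeasurableSpace.comap X inferInstance]
      =ᵐ[μ] μ[μ[(fun ω => ψ (Y ω) / G (Y ω)) *
          (fun ω => if Y ω ≤ C ω then (1:ℝ) else 0) | MeasurableSpace.comap X inferInstance ⊔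
            MeasurableSpace.comap Y inferInstance] | MeasurableSpace.comap X inferInstance] :=
        (condExp_condExp_of_le le_sup_left hm).symm
    _ =ᵐ[μ] μ[(fun ω => ψ (Y ω)) | MeasurableSpace.comap X inferInstance] :=
        condExp_congr_ae hstep
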